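/- Let X be a real or complex Banach space which is quasi-reflexive of order 1, and let M be a closed linear subspace of X. Then: (i) M, endowed with the induced norm, is either reflexive or quasi-reflexive of order 1; and (ii) the quotient space X/M, endowed with the quotient norm, is either reflexive or quasi-reflexive of order 1. -/

import Mathlib

set_option maxHeartbeats 4000000
set_option synthInstance.maxHeartbeats 400000

open NormedSpace (inclusionInDoubleDual)
open Module (finrank)



/-- A (semi)normed space `E` over `𝕜` is reflexive if the canonical embedding into its
bidual is surjective. -/
def IsReflexiveSpace (𝕜 : Type*) (E : Type*) [NontriviallyNormedField 𝕜]
    [SeminormedAddCommGroup E] [NormedSpace 𝕜 E] : Prop :=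
  Function.Surjective (NormedSpace.inclusionInDoubleDual 𝕜 E)

/-- A (semi)normed space `E` over `𝕜` is quasi-reflexive of order `1` if the canonical
embedding of `E` into its bidual has range of codimension `1`, i.e. the quotient of the
bidual by this range is one-dimensional. -/
def IsQuasiReflexiveOfOrderOne (𝕜 : Type*) (E : Type*) [NontriviallyNormedField 𝕜]
    [SeminormedAddCommGroup E] [NormedSpace 𝕜 E] : Prop :=
  Module.finrank 𝕜
    ((@Submodule.hasQuotient 𝕜 (StrongDual 𝕜 (StrongDual 𝕜 E)) _ _ _).Quotient
      (LinearMap.range (NormedSpace.inclusionInDoubleDual 𝕜 E : E →ₗ[𝕜] StrongDual 𝕜 (StrongDual 𝕜 E)))) = 1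

instance strongDualHasQuotient {𝕜 : Type*} {F : Type*} [NontriviallyNormedField 𝕜]
    [SeminormedAddCommGroup F] [NormedSpace 𝕜 F] :
    HasQuotient (StrongDual 𝕜 F) (Submodule 𝕜 (StrongDual 𝕜 F)) := Submodule.hasQuotient

lemma aux_dichotomy (𝕜 : Type*) (E : Type*) [RCLike 𝕜] [SeminormedAddCommGroup E]
    [NormedSpace 𝕜 E]
    (hfin : Module.Finite 𝕜 (StrongDual 𝕜 (StrongDual 𝕜 E) ⧸
      LinearMap.range (inclusionInDoubleDual 𝕜 E : E →ₗ[𝕜] StrongDual 𝕜 (StrongDual 𝕜 E))))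
    (h : finrank 𝕜 (StrongDual 𝕜 (StrongDual 𝕜 E) ⧸
      LinearMap.range (inclusionInDoubleDual 𝕜 E : E →ₗ[𝕜] StrongDual 𝕜 (StrongDual 𝕜 E))) ≤ 1) :
    IsReflexiveSpace 𝕜 E ∨ IsQuasiReflexiveOfOrderOne 𝕜 E := by
  rcases Nat.le_one_iff_eq_zero_or_eq_one.mp h with h0 | h1
  · left
    have hsub : Subsingleton
        (StrongDual 𝕜 (StrongDual 𝕜 E) ⧸
          LinearMap.range (inclusionInDoubleDual 𝕜 E : E →ₗ[𝕜] StrongDual 𝕜 (StrongDual 𝕜 E))) :=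
      Module.finrank_zero_iff.mp h0
    have htop := Submodule.Quotient.subsingleton_iff.mp hsub
    rw [IsReflexiveSpace]
    exact LinearMap.range_eq_top.mp htop
  · right; exact h1

section Main

variable (𝕜 : Type*) [RCLike 𝕜] (X : Type*) [NormedAddCommGroup X] [NormedSpace 𝕜 X]
  (M : Submodule 𝕜 X)

lemma subspace_case (hM : IsClosed (M : Set X)) (hX : IsQuasiReflexiveOfOrderOne 𝕜 X) :
    IsReflexiveSpace 𝕜 ↥M ∨ IsQuasiReflexiveOfOrderOne 𝕜 ↥M := by
  haveI := hM
  set ιM : ↥M →ₗ[𝕜] StrongDual 𝕜 (StrongDual 𝕜 ↥M) := ↑(inclusionInDoubleDual 𝕜 ↥M) with hιM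
  set ιX : X →ₗ[𝕜] StrongDual 𝕜 (StrongDual 𝕜 X) := ↑(inclusionInDoubleDual 𝕜 X) with hιX
  -- the restriction map on duals
  set r : StrongDual 𝕜 X →L[𝕜] StrongDual 𝕜 ↥M :=
    (ContinuousLinearMap.compL 𝕜 ↥M X 𝕜).flip M.subtypeL with hrdef
  have hr : ∀ (f : StrongDual 𝕜 X) (x : ↥M), r f x = f x := fun f x => rfl
  have hrsurj : ∀ g : StrongDual 𝕜 ↥M, ∃ f, r f = g := by
    intro g
    obtain ⟨f, hf, -⟩ := exists_extension_norm_eq M g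
    exact ⟨f, ContinuousLinearMap.ext fun x => hf x⟩
  -- the bidual map
  set Φ : StrongDual 𝕜 (StrongDual 𝕜 ↥M) →L[𝕜] StrongDual 𝕜 (StrongDual 𝕜 X) :=
    (ContinuousLinearMap.compL 𝕜 (StrongDual 𝕜 X) (StrongDual 𝕜 ↥M) 𝕜).flip r with hΦdef
  have hΦ : ∀ (F : StrongDual 𝕜 (StrongDual 𝕜 ↥M)) (f : StrongDual 𝕜 X), Φ F f = F (r f) := fun F f => rfl
  have hcomm : ∀ x : ↥M, Φ (ιM x) = ιX (x : X) := by
    intro x; ext f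
    calc Φ (ιM x) f = (ιM x) (r f) := rfl
      _ = r f x := rfl
      _ = f (x : X) := rfl
  -- the quotient map onto X/M, as a continuous linear map
  set πc : X →L[𝕜] (X ⧸ M) :=
    M.mkQ.mkContinuous 1 (fun x => by
      simpa using Submodule.Quotient.norm_mk_le M x) with hπdef
  have hπ : ∀ x : X, πc x = Submodule.Quotient.mk x := fun _ => rfl
  -- separation of points from the closed subspace M
  have hsep : ∀ x : X, x ∉ M → ∃ f : StrongDual 𝕜 X, r f = 0 ∧ f x ≠ 0 := by
    intro x hx
    have hne0 : (Submodule.Quotient.mk x : X ⧸ M) ≠ 0 := by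
      simpa [Submodule.Quotient.mk_eq_zero] using hx
    obtain ⟨g, -, hg⟩ := exists_dual_vector 𝕜 (Submodule.Quotient.mk x : X ⧸ M) (by simpa using hne0)
    refine ⟨g.comp πc, ?_, ?_⟩
    · ext m
      have : (Submodule.Quotient.mk (m : X) : X ⧸ M) = 0 :=
        (Submodule.Quotient.mk_eq_zero M).mpr m.2
      simp [hr, hπ, this]
    · have hnorm : ‖(Submodule.Quotient.mk x : X ⧸ M)‖ ≠ 0 := by
        simpa using hne0
      simp only [ContinuousLinearMap.comp_apply, hπ, hg]
      exact_mod_cast RCLike.ofReal_ne_zero.mpr hnorm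
  -- the key step
  have key : ∀ F : StrongDual 𝕜 (StrongDual 𝕜 ↥M),
      Φ F ∈ LinearMap.range ιX → F ∈ LinearMap.range ιM := by
    rintro F ⟨x, hx⟩
    have hxM : x ∈ M := by
      by_contra hxM
      obtain ⟨f, hf0, hfx⟩ := hsep x hxM
      apply hfx
      calc f x = ιX x f := rfl
        _ = Φ F f := by rw [hx]
        _ = F (r f) := hΦ F f
        _ = F 0 := by rw [hf0]
        _ = 0 := map_zero F
    refine ⟨⟨x, hxM⟩, ?_⟩
    ext g
    obtain ⟨f, rfl⟩ := hrsurj g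
    calc ιM ⟨x, hxM⟩ (r f) = r f ⟨x, hxM⟩ := rfl
      _ = f x := rfl
      _ = ιX x f := rfl
      _ = Φ F f := by rw [hx]
      _ = F (r f) := hΦ F f
  -- pass to quotients
  have hle : LinearMap.range ιM ≤
      (LinearMap.range ιX).comap (Φ : StrongDual 𝕜 (StrongDual 𝕜 ↥M) →ₗ[𝕜] StrongDual 𝕜 (StrongDual 𝕜 X)) := by
    rintro _ ⟨x, rfl⟩
    exact ⟨(x : X), (hcomm x).symm⟩
  set Ψ := Submodule.mapQ (M := StrongDual 𝕜 (StrongDual 𝕜 ↥M)) (M₂ := StrongDual 𝕜 (StrongDual 𝕜 X)) (LinearMap.range ιM) (LinearMap.range ιX)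
    (Φ : StrongDual 𝕜 (StrongDual 𝕜 ↥M) →ₗ[𝕜] StrongDual 𝕜 (StrongDual 𝕜 X)) hle with hΨdef
  have hΨinj : Function.Injective Ψ := by
    intro a b hab
    obtain ⟨F, rfl⟩ := Submodule.Quotient.mk_surjective _ a
    obtain ⟨G, rfl⟩ := Submodule.Quotient.mk_surjective _ b
    rw [Submodule.mapQ_apply, Submodule.mapQ_apply, Submodule.Quotient.eq] at hab
    rw [Submodule.Quotient.eq]
    exact key _ (by simpa using hab)
  have hX' : finrank 𝕜 (StrongDual 𝕜 (StrongDual 𝕜 X) ⧸ LinearMap.range ιX) = 1 := hX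
  haveI hfinX : Module.Finite 𝕜
      (StrongDual 𝕜 (StrongDual 𝕜 X) ⧸ LinearMap.range ιX) :=
    Module.finite_of_finrank_pos (by rw [hX']; norm_num)
  haveI hfinM : Module.Finite 𝕜
      (StrongDual 𝕜 (StrongDual 𝕜 ↥M) ⧸ LinearMap.range ιM) :=
    Module.Finite.of_injective Ψ hΨinj
  have hle1 : finrank 𝕜 (StrongDual 𝕜 (StrongDual 𝕜 ↥M) ⧸ LinearMap.range ιM) ≤ 1 :=
    hX' ▸ LinearMap.finrank_le_finrank_of_injective hΨinj
  exact aux_dichotomy 𝕜 ↥M hfinM hle1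

lemma quotient_case (hX : IsQuasiReflexiveOfOrderOne 𝕜 X) :
    IsReflexiveSpace 𝕜 (X ⧸ M) ∨ IsQuasiReflexiveOfOrderOne 𝕜 (X ⧸ M) := by
  set ιX : X →ₗ[𝕜] StrongDual 𝕜 (StrongDual 𝕜 X) := ↑(inclusionInDoubleDual 𝕜 X) with hιX
  set ιQ : (X ⧸ M) →ₗ[𝕜] StrongDual 𝕜 (StrongDual 𝕜 (X ⧸ M)) := ↑(inclusionInDoubleDual 𝕜 (X ⧸ M)) with hιQ
  set πc : X →L[𝕜] (X ⧸ M) :=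
    M.mkQ.mkContinuous 1 (fun x => by
      simpa using Submodule.Quotient.norm_mk_le M x) with hπdef
  have hπ : ∀ x : X, πc x = Submodule.Quotient.mk x := fun _ => rfl
  set j : StrongDual 𝕜 (X ⧸ M) →L[𝕜] StrongDual 𝕜 X :=
    (ContinuousLinearMap.compL 𝕜 X (X ⧸ M) 𝕜).flip πc with hjdef
  have hj : ∀ (g : StrongDual 𝕜 (X ⧸ M)) (x : X), j g x = g (Submodule.Quotient.mk x) :=
    fun g x => rfl
  -- `j` does not decrease norms
  have hnorm : ∀ g : StrongDual 𝕜 (X ⧸ M), ‖g‖ ≤ ‖j g‖ := by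
    intro g
    refine g.opNorm_le_bound (norm_nonneg _) fun q => ?_
    refine le_of_forall_pos_le_add fun ε hε => ?_
    have hd : (0:ℝ) < ε / (‖j g‖ + 1) := by positivity
    obtain ⟨x, hxq, hxlt⟩ := Submodule.Quotient.norm_mk_lt q hd
    have h1 : g q = j g x := by rw [hj, hxq]
    have h2 : ‖j g x‖ ≤ ‖j g‖ * ‖x‖ := (j g).le_opNorm x
    have h3 : ‖j g‖ * ‖x‖ ≤ ‖j g‖ * (‖q‖ + ε / (‖j g‖ + 1)) :=
      mul_le_mul_of_nonneg_left hxlt.le (norm_nonneg _)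
    have h4 : ‖j g‖ * (ε / (‖j g‖ + 1)) ≤ ε := by
      rw [mul_div_assoc']
      rw [div_le_iff₀ (by positivity)]
      nlinarith [norm_nonneg (j g), hε.le]
    calc ‖g q‖ = ‖j g x‖ := by rw [h1]
      _ ≤ ‖j g‖ * ‖x‖ := h2
      _ ≤ ‖j g‖ * ‖q‖ + ‖j g‖ * (ε / (‖j g‖ + 1)) := by rw [← mul_add]; exact h3
      _ ≤ ‖j g‖ * ‖q‖ + ε := by linarith
  have hjinj : Function.Injective j := by
    intro g₁ g₂ h
    have hle0 : ‖g₁ - g₂‖ ≤ 0 := by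
      have := hnorm (g₁ - g₂)
      rw [map_sub, h, sub_self, norm_zero] at this
      exact this
    refine ContinuousLinearMap.ext fun q => ?_
    have h1 : ‖(g₁ - g₂) q‖ ≤ ‖g₁ - g₂‖ * ‖q‖ := (g₁ - g₂).le_opNorm q
    have h2 : ‖(g₁ - g₂) q‖ ≤ 0 :=
      h1.trans (mul_nonpos_iff.mpr (Or.inr ⟨hle0, norm_nonneg q⟩))
    have h3 : (g₁ - g₂) q = 0 := norm_le_zero_iff.mp h2
    rw [ContinuousLinearMap.sub_apply] at h3
    exact sub_eq_zero.mp h3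
  -- the bidual map
  set Φ' : StrongDual 𝕜 (StrongDual 𝕜 X) →L[𝕜] StrongDual 𝕜 (StrongDual 𝕜 (X ⧸ M)) :=
    (ContinuousLinearMap.compL 𝕜 (StrongDual 𝕜 (X ⧸ M)) (StrongDual 𝕜 X) 𝕜).flip j with hΦ'def
  have hΦ' : ∀ (F : StrongDual 𝕜 (StrongDual 𝕜 X)) (g : StrongDual 𝕜 (X ⧸ M)), Φ' F g = F (j g) :=
    fun F g => rfl
  have hcomm' : ∀ x : X, Φ' (ιX x) = ιQ (Submodule.Quotient.mk x) := by
    intro x; ext g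
    calc Φ' (ιX x) g = (ιX x) (j g) := rfl
      _ = j g x := rfl
      _ = g (Submodule.Quotient.mk x) := rfl
      _ = ιQ (Submodule.Quotient.mk x) g := rfl
  -- surjectivity of Φ'
  have hsurjΦ' : ∀ G : StrongDual 𝕜 (StrongDual 𝕜 (X ⧸ M)), ∃ F, Φ' F = G := by
    intro G
    have hjinj' : Function.Injective (j : StrongDual 𝕜 (X ⧸ M) →ₗ[𝕜] StrongDual 𝕜 X) := hjinj
    set N : Submodule 𝕜 (StrongDual 𝕜 X) :=
      LinearMap.range (j : StrongDual 𝕜 (X ⧸ M) →ₗ[𝕜] StrongDual 𝕜 X) with hNdef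
    set e : StrongDual 𝕜 (X ⧸ M) ≃ₗ[𝕜] N :=
      LinearEquiv.ofInjective (j : StrongDual 𝕜 (X ⧸ M) →ₗ[𝕜] StrongDual 𝕜 X) hjinj' with hedef
    have hecoe : ∀ g : StrongDual 𝕜 (X ⧸ M), ((e g : N) : StrongDual 𝕜 X) = j g := fun g => rfl
    have hbound : ∀ h : N,
        ‖(G.toLinearMap ∘ₗ
          (e.symm : N →ₗ[𝕜] StrongDual 𝕜 (X ⧸ M))) h‖ ≤ ‖G‖ * ‖h‖ := by
      intro h
      have h1 : ‖G (e.symm h)‖ ≤ ‖G‖ * ‖e.symm h‖ := G.le_opNorm _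
      have h2 : j (e.symm h) = (h : StrongDual 𝕜 X) := by
        rw [← hecoe (e.symm h), e.apply_symm_apply]
      have h3 : ‖e.symm h‖ ≤ ‖h‖ := by
        have hh := hnorm (e.symm h)
        rw [h2] at hh
        exact hh
      exact h1.trans (mul_le_mul_of_nonneg_left h3 (norm_nonneg G))
    set f₀ : N →L[𝕜] 𝕜 :=
      LinearMap.mkContinuous (E := N) (F := 𝕜)
        (G.toLinearMap ∘ₗ (e.symm : N →ₗ[𝕜] StrongDual 𝕜 (X ⧸ M)))
        ‖G‖ hbound with hf₀def
    obtain ⟨F, hF, -⟩ := exists_extension_norm_eq N f₀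
    refine ⟨F, ContinuousLinearMap.ext fun g => ?_⟩
    have hm : j g ∈ N := ⟨g, rfl⟩
    have heq : (⟨j g, hm⟩ : N) = e g := Subtype.ext (hecoe g).symm
    calc Φ' F g = F ((⟨j g, hm⟩ : N) : StrongDual 𝕜 X) := rfl
      _ = f₀ ⟨j g, hm⟩ := hF ⟨j g, hm⟩
      _ = G (e.symm ⟨j g, hm⟩) := rfl
      _ = G g := by rw [heq, e.symm_apply_apply]
  -- pass to quotients
  have hle' : LinearMap.range ιX ≤
      (LinearMap.range ιQ).comap (Φ' : StrongDual 𝕜 (StrongDual 𝕜 X) →ₗ[𝕜] StrongDual 𝕜 (StrongDual 𝕜 (X ⧸ M))) := by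
    rintro _ ⟨x, rfl⟩
    exact ⟨Submodule.Quotient.mk x, (hcomm' x).symm⟩
  set Ψ' := Submodule.mapQ (M := StrongDual 𝕜 (StrongDual 𝕜 X)) (M₂ := StrongDual 𝕜 (StrongDual 𝕜 (X ⧸ M))) (LinearMap.range ιX) (LinearMap.range ιQ)
    (Φ' : StrongDual 𝕜 (StrongDual 𝕜 X) →ₗ[𝕜] StrongDual 𝕜 (StrongDual 𝕜 (X ⧸ M))) hle' with hΨ'def
  have hΨ'surj : Function.Surjective Ψ' := by
    intro y
    obtain ⟨G, rfl⟩ := Submodule.Quotient.mk_surjective _ y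
    obtain ⟨F, hF⟩ := hsurjΦ' G
    exact ⟨Submodule.Quotient.mk F, by rw [Submodule.mapQ_apply]; exact congrArg _ hF⟩
  have hX' : finrank 𝕜 (StrongDual 𝕜 (StrongDual 𝕜 X) ⧸ LinearMap.range ιX) = 1 := hX
  haveI hfinX : Module.Finite 𝕜 (StrongDual 𝕜 (StrongDual 𝕜 X) ⧸ LinearMap.range ιX) :=
    Module.finite_of_finrank_pos (by rw [hX']; norm_num)
  haveI hfinQ : Module.Finite 𝕜
      (StrongDual 𝕜 (StrongDual 𝕜 (X ⧸ M)) ⧸ LinearMap.range ιQ) :=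
    Module.Finite.of_surjective Ψ' hΨ'surj
  have hle1 : finrank 𝕜 (StrongDual 𝕜 (StrongDual 𝕜 (X ⧸ M)) ⧸ LinearMap.range ιQ) ≤ 1 := by
    have h1 := LinearMap.finrank_range_le Ψ'
    rw [LinearMap.range_eq_top.mpr hΨ'surj, finrank_top] at h1
    exact h1.trans (le_of_eq hX')
  exact aux_dichotomy 𝕜 (X ⧸ M) hfinQ hle1

end Main

/-- **Fact 6.1 of the paper.** Let `X` be a (real or complex) Banach space which
is quasi-reflexive of order `1` and `M` a closed linear subspace of `X`.  Then (i) `M` is either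
reflexive or quasi-reflexive of order `1`, and (ii) the quotient `X/M` is either reflexive or
quasi-reflexive of order `1`. -/
theorem subspace_and_quotient_of_quasireflexive
    (𝕜 : Type*) [RCLike 𝕜] (X : Type*) [NormedAddCommGroup X] [NormedSpace 𝕜 X]
    [CompleteSpace X]
    (hX : IsQuasiReflexiveOfOrderOne 𝕜 X)
    (M : Submodule 𝕜 X) (hM : IsClosed (M : Set X)) :
    (IsReflexiveSpace 𝕜 ↥M ∨ IsQuasiReflexiveOfOrderOne 𝕜 ↥M) ∧
    (IsReflexiveSpace 𝕜 (X ⧸ M) ∨ IsQuasiReflexiveOfOrderOne 𝕜 (X ⧸ M)) :=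
  ⟨subspace_case 𝕜 X M hM hX, quotient_case 𝕜 X M hX⟩
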